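/- Let Λ be a lattice in ℝ^m, y ∈ ℝ^m, and x ∈ Λ. If x is not a closest lattice point to y, then there exists a relevant vector v of Λ such that ‖y − x − v‖ < ‖y − x‖. Consequently, in the iteration x_{k+1} = x_k + v_k with v_k a minimizer of ‖y − x_k − v‖ over v in R(Λ) ∪ {0}, either x_k is a closest lattice point to y or ‖y − x_k‖ > ‖y − x_{k+1}‖. -/

import Mathlib

open scoped RealInnerProductSpace

/-- A relevant vector of the lattice `Λ`: a nonzero lattice point `v` with
`⟨v, x⟩ ≤ ⟨x, x⟩` for all `x ∈ Λ`. -/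
def IsRelevantVector {E : Type*} [NormedAddCommGroup E] [InnerProductSpace ℝ E]
    (Λ : Set E) (v : E) : Prop :=
  v ∈ Λ ∧ v ≠ 0 ∧ ∀ x ∈ Λ, ⟪v, x⟫ ≤ ⟪x, x⟫

section Aux

variable {n m : ℕ}

lemma lattice_sub_mem (b : Fin n → EuclideanSpace ℝ (Fin m))
    {Λ : Set (EuclideanSpace ℝ (Fin m))}
    (hΛ : Λ = {x | ∃ u : Fin n → ℤ, x = ∑ i, (u i : ℝ) • b i})
    {x y : EuclideanSpace ℝ (Fin m)} (hx : x ∈ Λ) (hy : y ∈ Λ) : x - y ∈ Λ := by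
  subst hΛ
  obtain ⟨u, rfl⟩ := hx
  obtain ⟨u', rfl⟩ := hy
  refine ⟨u - u', ?_⟩
  rw [← Finset.sum_sub_distrib]
  refine Finset.sum_congr rfl fun i _ => ?_
  simp only [Pi.sub_apply]
  push_cast
  rw [sub_smul]

lemma lattice_ball_finite (b : Fin n → EuclideanSpace ℝ (Fin m))
    (hb : LinearIndependent ℝ b)
    {Λ : Set (EuclideanSpace ℝ (Fin m))}
    (hΛ : Λ = {x | ∃ u : Fin n → ℤ, x = ∑ i, (u i : ℝ) • b i})
    (R : ℝ) : {w ∈ Λ | ‖w‖ ≤ R}.Finite := by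
  set W := Submodule.span ℝ (Set.range b) with hW
  haveI : FiniteDimensional ℝ W := FiniteDimensional.span_of_finite ℝ (Set.finite_range b)
  let Bw : Module.Basis (Fin n) ℝ W := Module.Basis.span hb
  set L : Submodule ℤ W := Submodule.span ℤ (Set.range Bw) with hL
  have hfin : (Metric.closedBall (0 : W) R ∩ (L : Set W)).Finite := by
    change ((_ : Set W) ∩ (L.toAddSubgroup : Set W)).Finite
    haveI : DiscreteTopology L.toAddSubgroup := (inferInstance : DiscreteTopology L)
    exact Metric.finite_isBounded_inter_isClosed DiscreteTopology.isDiscrete Metric.isBounded_closedBall inferInstance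
  refine Set.Finite.subset (hfin.image Subtype.val) ?_
  rintro w ⟨hwΛ, hwR⟩
  rw [hΛ] at hwΛ
  obtain ⟨u, rfl⟩ := hwΛ
  have hcoe : ((∑ i, u i • Bw i : W) : EuclideanSpace ℝ (Fin m))
      = ∑ i, (u i : ℝ) • b i := by
    rw [AddSubmonoidClass.coe_finset_sum]
    refine Finset.sum_congr rfl fun i _ => ?_
    rw [← Int.cast_smul_eq_zsmul ℝ, Submodule.coe_smul, Module.Basis.span_apply]
  refine ⟨∑ i, u i • Bw i, ⟨?_, ?_⟩, hcoe⟩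
  · rw [Metric.mem_closedBall, dist_zero_right]
    show ‖((∑ i, u i • Bw i : W) : EuclideanSpace ℝ (Fin m))‖ ≤ R
    rw [hcoe]; exact hwR
  · exact Submodule.sum_mem _ fun i _ =>
      Submodule.smul_mem _ _ (Submodule.subset_span ⟨i, rfl⟩)

lemma exists_relevant_decrease (b : Fin n → EuclideanSpace ℝ (Fin m))
    (hb : LinearIndependent ℝ b)
    {Λ : Set (EuclideanSpace ℝ (Fin m))}
    (hΛ : Λ = {x | ∃ u : Fin n → ℤ, x = ∑ i, (u i : ℝ) • b i})
    (z : EuclideanSpace ℝ (Fin m))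
    (h : ∃ w ∈ Λ, ‖z - w‖ < ‖z‖) :
    ∃ v, IsRelevantVector Λ v ∧ ‖z - v‖ < ‖z‖ := by
  set S : Set (EuclideanSpace ℝ (Fin m)) := {w | w ∈ Λ ∧ ‖z - w‖ < ‖z‖} with hS
  have hSfin : S.Finite := by
    refine (lattice_ball_finite b hb hΛ (2 * ‖z‖)).subset ?_
    rintro w ⟨hw1, hw2⟩
    refine ⟨hw1, ?_⟩
    have h1 : ‖w‖ ≤ ‖z‖ + ‖w - z‖ := norm_le_norm_add_norm_sub' w z
    rw [norm_sub_rev] at h1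
    linarith
  have hSne : S.Nonempty := by
    obtain ⟨w, hw1, hw2⟩ := h
    exact ⟨w, hw1, hw2⟩
  obtain ⟨w, hwS, hmin⟩ := Set.exists_min_image S norm hSfin hSne
  have hw0 : w ≠ 0 := by
    rintro rfl
    simpa using hwS.2
  refine ⟨w, ⟨hwS.1, hw0, ?_⟩, hwS.2⟩
  intro x hx
  by_contra hlt
  push_neg at hlt
  have hx0 : x ≠ 0 := by
    rintro rfl
    simp at hlt
  have hwx0 : w - x ≠ 0 := by
    intro hwx
    have : w = x := by
      have := sub_eq_zero.mp hwx; exact this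
    rw [this] at hlt
    exact lt_irrefl _ hlt
  -- arithmetic setup
  have exw : ⟪x, x⟫ = ‖x‖ ^ 2 := real_inner_self_eq_norm_sq x
  have e1 : ‖z - w‖ ^ 2 = ‖z‖ ^ 2 - 2 * ⟪z, w⟫ + ‖w‖ ^ 2 := norm_sub_sq_real z w
  have e2 : ‖z - x‖ ^ 2 = ‖z‖ ^ 2 - 2 * ⟪z, x⟫ + ‖x‖ ^ 2 := norm_sub_sq_real z x
  have e3 : ‖z - (w - x)‖ ^ 2 = ‖z‖ ^ 2 - 2 * ⟪z, w - x⟫ + ‖w - x‖ ^ 2 :=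
    norm_sub_sq_real z (w - x)
  have e4 : ‖w - x‖ ^ 2 = ‖w‖ ^ 2 - 2 * ⟪w, x⟫ + ‖x‖ ^ 2 := norm_sub_sq_real w x
  have e5 : ⟪z, w - x⟫ = ⟪z, w⟫ - ⟪z, x⟫ := inner_sub_right z w x
  have hzw2 : ‖z - w‖ ^ 2 < ‖z‖ ^ 2 := by
    have := hwS.2
    nlinarith [norm_nonneg (z - w), norm_nonneg z]
  have hxpos : 0 < ‖x‖ ^ 2 := pow_pos (norm_pos_iff.mpr hx0) 2
  have hwxpos : 0 < ‖w - x‖ ^ 2 := pow_pos (norm_pos_iff.mpr hwx0) 2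
  -- ‖x‖² + ‖w-x‖² < ‖w‖²
  have hsum : ‖x‖ ^ 2 + ‖w - x‖ ^ 2 < ‖w‖ ^ 2 := by
    rw [exw] at hlt
    nlinarith
  have hxw : ‖x‖ < ‖w‖ := by
    have : ‖x‖ ^ 2 < ‖w‖ ^ 2 := by linarith
    exact lt_of_pow_lt_pow_left₀ 2 (norm_nonneg w) this
  have hwxw : ‖w - x‖ < ‖w‖ := by
    have : ‖w - x‖ ^ 2 < ‖w‖ ^ 2 := by linarith
    exact lt_of_pow_lt_pow_left₀ 2 (norm_nonneg w) this
  by_cases h2 : ‖z - x‖ < ‖z‖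
  · have hxS : x ∈ S := ⟨hx, h2⟩
    have := hmin x hxS
    linarith
  · push_neg at h2
    have h2sq : ‖z‖ ^ 2 ≤ ‖z - x‖ ^ 2 := by
      nlinarith [norm_nonneg z, norm_nonneg (z - x)]
    have h3sq : ‖z - (w - x)‖ ^ 2 < ‖z‖ ^ 2 := by
      rw [exw] at hlt
      nlinarith
    have h3 : ‖z - (w - x)‖ < ‖z‖ :=
      lt_of_pow_lt_pow_left₀ 2 (norm_nonneg z) h3sq
    have hwxS : w - x ∈ S := ⟨lattice_sub_mem b hΛ hwS.1 hx, h3⟩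
    have := hmin (w - x) hwxS
    linarith

end Aux

/-- If `x ∈ Λ` is not a closest lattice point to `y`, then some relevant
vector `v` satisfies `‖y − x − v‖ < ‖y − x‖`.  Consequently, in the iteration
`x_{k+1} = x_k + v_k` with `v_k` a minimizer of `‖y − x_k − v‖` over `v ∈ R(Λ) ∪ {0}`,
either `x_k` is a closest lattice point to `y` or `‖y − x_k‖ > ‖y − x_{k+1}‖`. -/
theorem relevant_vector_strict_decrease
    (n m : ℕ) (b : Fin n → EuclideanSpace ℝ (Fin m))
    (hb : LinearIndependent ℝ b)
    (Λ : Set (EuclideanSpace ℝ (Fin m)))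
    (hΛ : Λ = {x | ∃ u : Fin n → ℤ, x = ∑ i, (u i : ℝ) • b i})
    (y : EuclideanSpace ℝ (Fin m)) :
    (∀ x ∈ Λ, ¬(∀ x' ∈ Λ, ‖y - x‖ ≤ ‖y - x'‖) →
      ∃ v, IsRelevantVector Λ v ∧ ‖y - x - v‖ < ‖y - x‖) ∧
    (∀ xk ∈ Λ, ∀ vk, (IsRelevantVector Λ vk ∨ vk = 0) →
      (∀ v, (IsRelevantVector Λ v ∨ v = 0) → ‖y - xk - vk‖ ≤ ‖y - xk - v‖) →
      (∀ x' ∈ Λ, ‖y - xk‖ ≤ ‖y - x'‖) ∨ ‖y - xk‖ > ‖y - (xk + vk)‖) := by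
  have key : ∀ x ∈ Λ, ¬(∀ x' ∈ Λ, ‖y - x‖ ≤ ‖y - x'‖) →
      ∃ v, IsRelevantVector Λ v ∧ ‖y - x - v‖ < ‖y - x‖ := by
    intro x hx hnc
    push_neg at hnc
    obtain ⟨x', hx', hlt⟩ := hnc
    have hw : x' - x ∈ Λ := lattice_sub_mem b hΛ hx' hx
    have hz : ‖(y - x) - (x' - x)‖ < ‖y - x‖ := by
      have : (y - x) - (x' - x) = y - x' := by abel
      rw [this]; exact hlt
    obtain ⟨v, hv1, hv2⟩ := exists_relevant_decrease b hb hΛ (y - x) ⟨x' - x, hw, hz⟩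
    exact ⟨v, hv1, hv2⟩
  refine ⟨key, ?_⟩
  intro xk hxk vk _ hminv
  by_cases hc : ∀ x' ∈ Λ, ‖y - xk‖ ≤ ‖y - x'‖
  · exact Or.inl hc
  · right
    obtain ⟨v, hv1, hv2⟩ := key xk hxk hc
    have h1 : ‖y - (xk + vk)‖ = ‖y - xk - vk‖ := by
      congr 1; abel
    calc ‖y - (xk + vk)‖ = ‖y - xk - vk‖ := h1
      _ ≤ ‖y - xk - v‖ := hminv v (Or.inl hv1)
      _ < ‖y - xk‖ := hv2
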